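/- Let F be a field, k ≥ 1, let M be an m^k×n^k matrix over F and let A be an m×n matrix over F. Then M = ⊗^k A if and only if for every j ∈ {1,…,k}, R^{(j)}_{m×n}(M) = vec(A) · vec(⊗^{k-1} A)ᵀ. -/

import Mathlib

open Matrix Kronecker

/-- `vec A` is the vector of entries of the matrix `A`, indexed by pairs. -/
def vec {F : Type*} [Field F] {α β : Type*} (A : Matrix α β F) : α × β → F :=
  fun p => A p.1 p.2

/-- The rearrangement operator `R_{m×n}`:
`R M ((i,j),(k,l)) = M ((i,k),(j,l))`. -/
def R {F : Type*} [Field F] {m n : ℕ}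
    (M : Matrix (Fin m × Fin m) (Fin n × Fin n) F) :
    Matrix (Fin m × Fin n) (Fin m × Fin n) F :=
  fun p q => M (p.1, q.1) (p.2, q.2)

/-- The `j`-th rearrangement operator `R^{(j)}_{m×n}` on `m^k × n^k` matrices
(here with `k` replaced by `k+1` so that `k ≥ 1` automatically): the entry at
row `(a,b)` and column `(r,c)` is the entry of `M` at the tuples obtained from
`r` and `c` by inserting `a` resp. `b` at position `j`. -/
def Rj {F : Type*} [Field F] {m n k : ℕ} (j : Fin (k + 1))
    (M : Matrix (Fin (k + 1) → Fin m) (Fin (k + 1) → Fin n) F) :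
    Matrix (Fin m × Fin n) ((Fin k → Fin m) × (Fin k → Fin n)) F :=
  fun p q => M (j.insertNth p.1 q.1) (j.insertNth p.2 q.2)

/-- `R^Σ_{m×n} = Σ_j R^{(j)}_{m×n}`. -/
def RSigma {F : Type*} [Field F] {m n k : ℕ}
    (M : Matrix (Fin (k + 1) → Fin m) (Fin (k + 1) → Fin n) F) :
    Matrix (Fin m × Fin n) ((Fin k → Fin m) × (Fin k → Fin n)) F :=
  ∑ j : Fin (k + 1), Rj j M

/-- The `k`-th Kronecker power of an `m×n` matrix, indexed by tuples. -/
def kpow {F : Type*} [Field F] {m n : ℕ} (A : Matrix (Fin m) (Fin n) F) (k : ℕ) :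
    Matrix (Fin k → Fin m) (Fin k → Fin n) F :=
  fun r c => ∏ i, A (r i) (c i)

/-- The `k`-fold Kronecker product of a family of `m×n` matrices,
indexed by tuples. -/
def kprodFam {F : Type*} [Field F] {m n k : ℕ}
    (A : Fin k → Matrix (Fin m) (Fin n) F) :
    Matrix (Fin k → Fin m) (Fin k → Fin n) F :=
  fun r c => ∏ i, A i (r i) (c i)

/-- `M = ⊗^k A` iff `R^{(j)}(M) = vec(A) vec(⊗^{k-1} A)ᵀ` for
every `j` (here the order `k ≥ 1` of the paper is represented as `k + 1`). -/
theorem stmt_7 {F : Type*} [Field F] {m n k : ℕ}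
    (M : Matrix (Fin (k + 1) → Fin m) (Fin (k + 1) → Fin n) F)
    (A : Matrix (Fin m) (Fin n) F) :
    M = kpow A (k + 1) ↔
      ∀ j : Fin (k + 1), Rj j M = vecMulVec (_root_.vec A) (_root_.vec (kpow A k)) := by
  constructor
  · rintro rfl j
    ext p q
    simp only [Rj, kpow, vecMulVec_apply, _root_.vec]
    rw [Fin.prod_univ_succAbove _ j]
    simp [Fin.insertNth_apply_same, Fin.insertNth_apply_succAbove]
  · intro h
    ext r c
    have := congrFun (congrFun (h 0) (r 0, c 0)) (Fin.removeNth 0 r, Fin.removeNth 0 c)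
    simp only [Rj, vecMulVec_apply, _root_.vec, kpow, Fin.insertNth_self_removeNth] at this
    rw [this, kpow, Fin.prod_univ_succAbove _ (0 : Fin (k + 1))]
    rfl
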